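/- For every l < 0 there exists d ≥ 0 such that tanh(d) − tanh(l) = (1 − tanh(d)²)(d − l); that is, the tangent line to tanh at the point d on the concave branch passes through the point (l, tanh(l)). -/

import Mathlib

open Real

lemma sinh_le_mul_cosh {x : ℝ} (hx : 0 ≤ x) : Real.sinh x ≤ x * Real.cosh x := by
  have hmono : MonotoneOn (fun x : ℝ => x * Real.cosh x - Real.sinh x) (Set.Ici 0) := by
    apply monotoneOn_of_deriv_nonneg (convex_Ici 0)
    · exact ((continuous_id.mul Real.continuous_cosh).sub Real.continuous_sinh).continuousOn
    · intro x hx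
      exact (((hasDerivAt_id x).mul (Real.hasDerivAt_cosh x)).sub
        (Real.hasDerivAt_sinh x)).differentiableAt.differentiableWithinAt
    · intro x hx
      rw [interior_Ici] at hx
      have hd : deriv (fun x : ℝ => x * Real.cosh x - Real.sinh x) x
          = 1 * Real.cosh x + x * Real.sinh x - Real.cosh x :=
        (((hasDerivAt_id x).mul (Real.hasDerivAt_cosh x)).sub (Real.hasDerivAt_sinh x)).deriv
      rw [hd]
      have hx' : (0:ℝ) < x := hx
      have : 0 ≤ Real.sinh x := Real.sinh_nonneg_iff.mpr hx'.le
      nlinarith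
  have := hmono (Set.self_mem_Ici) hx hx
  simpa using this

lemma one_sub_tanh_sq (x : ℝ) : 1 - Real.tanh x ^ 2 = 1 / Real.cosh x ^ 2 := by
  rw [Real.tanh_eq_sinh_div_cosh, div_pow]
  have hc : Real.cosh x ^ 2 ≠ 0 := by positivity
  field_simp
  linarith [Real.cosh_sq x]


/-- For every `l < 0` there is a point `d ≥ 0` at which the tangent line of `tanh` passes
through `(l, tanh l)`, i.e. `tanh d - tanh l = (1 - tanh d ^ 2) * (d - l)`. -/
theorem tanh_tangent_point_exists (l : ℝ) (hl : l < 0) :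
    ∃ d : ℝ, 0 ≤ d ∧ Real.tanh d - Real.tanh l = (1 - Real.tanh d ^ 2) * (d - l) := by
  set f : ℝ → ℝ := fun d => Real.tanh d - Real.tanh l - (1 - Real.tanh d ^ 2) * (d - l) with hf
  have htanh_cont : Continuous Real.tanh := by
    have : Real.tanh = fun x => Real.sinh x / Real.cosh x := by
      funext x; exact Real.tanh_eq_sinh_div_cosh x
    rw [this]
    exact Real.continuous_sinh.div Real.continuous_cosh fun x => (Real.cosh_pos x).ne'
  have hcont : Continuous f := by
    apply (htanh_cont.sub continuous_const).sub
    exact (continuous_const.sub ((htanh_cont.pow 2))).mul (continuous_id.sub continuous_const)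
  -- f 0 ≤ 0, i.e. l ≤ tanh l
  have hl_le : l ≤ Real.tanh l := by
    rw [Real.tanh_eq_sinh_div_cosh, le_div_iff₀ (Real.cosh_pos l)]
    have := sinh_le_mul_cosh (x := -l) (by linarith)
    rw [Real.sinh_neg, Real.cosh_neg] at this
    linarith
  have h0 : f 0 ≤ 0 := by
    simp only [hf, Real.tanh_zero]
    nlinarith
  -- f (1 - l) ≥ 0
  set d0 : ℝ := 1 - l with hd0
  have hd0pos : (0:ℝ) < d0 := by simp [hd0]; linarith
  have hsinh : d0 ≤ Real.sinh d0 := Real.self_le_sinh_iff.mpr hd0pos.le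
  have hcosh : Real.sinh d0 < Real.cosh d0 := Real.sinh_lt_cosh d0
  have hcoshpos : (0:ℝ) < Real.cosh d0 := Real.cosh_pos d0
  have htanhl : Real.tanh l ≤ 0 := by
    rw [Real.tanh_eq_sinh_div_cosh]
    exact div_nonpos_of_nonpos_of_nonneg (Real.sinh_nonpos_iff.mpr hl.le) (Real.cosh_pos l).le
  have hkey : d0 - l ≤ Real.sinh d0 * Real.cosh d0 := by nlinarith
  have h1 : 0 ≤ f d0 := by
    have hts : (1 - Real.tanh d0 ^ 2) * (d0 - l) ≤ Real.tanh d0 := by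
      rw [one_sub_tanh_sq, Real.tanh_eq_sinh_div_cosh, div_mul_eq_mul_div, one_mul,
        div_le_div_iff₀ (by positivity) hcoshpos]
      nlinarith
    simp only [hf]
    linarith
  have hmem : (0:ℝ) ∈ Set.Icc (f 0) (f d0) := ⟨h0, h1⟩
  obtain ⟨d, hd, hfd⟩ := intermediate_value_Icc hd0pos.le hcont.continuousOn hmem
  exact ⟨d, hd.1, by simp only [hf] at hfd; linarith⟩
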